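/- Let |α|² ≥ 0 and β > 0, and let α₀ ∈ ℂ, β₀ > 0. Then ln(1 + |α|²/β) ≥ ln(1 + |α₀|²/β₀) − |α₀|²/β₀ + 2Re{α₀* α}/β₀ − (|α₀|²/(β₀(β₀ + |α₀|²))) (β + |α|²). -/
import Mathlib

/-- Algebraic core: the gap is a perfect square over a positive denominator. -/
lemma sinr_core (a a₀ β β₀ : ℝ) (ha : 0 ≤ a) (hβ : 0 < β) (hβ₀ : 0 < β₀) :
    1 + a₀ ^ 2 / β₀ - (1 + a₀ ^ 2 / β₀) * (β / (β + a ^ 2))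
      - 2 * (a₀ * a) / β₀ + (a₀ ^ 2 / (β₀ * (β₀ + a₀ ^ 2))) * (β + a ^ 2) ≥ 0 := by
  have hS : 0 < β + a ^ 2 := by positivity
  have hd : 0 < β₀ + a₀ ^ 2 := by positivity
  have key : 1 + a₀ ^ 2 / β₀ - (1 + a₀ ^ 2 / β₀) * (β / (β + a ^ 2))
      - 2 * (a₀ * a) / β₀ + (a₀ ^ 2 / (β₀ * (β₀ + a₀ ^ 2))) * (β + a ^ 2)
      = ((β₀ + a₀ ^ 2) * a - a₀ * (β + a ^ 2)) ^ 2 / (β₀ * (β₀ + a₀ ^ 2) * (β + a ^ 2)) := by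
    field_simp
    ring
  rw [key]
  positivity

/-- Concave lower bound on the SINR rate function `ln(1 + |α|²/β)` around the
point `(α₀, β₀)` (Nasir et al.). -/
theorem sinr_rate_lower_bound
    (α α₀ : ℂ) (β β₀ : ℝ) (hβ : 0 < β) (hβ₀ : 0 < β₀) :
    Real.log (1 + ‖α‖ ^ 2 / β) ≥
      Real.log (1 + ‖α₀‖ ^ 2 / β₀) - ‖α₀‖ ^ 2 / β₀
        + 2 * ((starRingEnd ℂ) α₀ * α).re / β₀
        - (‖α₀‖ ^ 2 / (β₀ * (β₀ + ‖α₀‖ ^ 2))) * (β + ‖α‖ ^ 2) := by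
  set a := ‖α‖ with ha
  set a₀ := ‖α₀‖ with ha₀
  have hA : 0 ≤ a := norm_nonneg _
  have hA₀ : 0 ≤ a₀ := norm_nonneg _
  have hre : ((starRingEnd ℂ) α₀ * α).re ≤ a₀ * a := by
    calc ((starRingEnd ℂ) α₀ * α).re ≤ ‖(starRingEnd ℂ) α₀ * α‖ := Complex.re_le_norm _
      _ = a₀ * a := by rw [norm_mul, RCLike.norm_conj]
  have hx : (0:ℝ) < 1 + a ^ 2 / β := by positivity
  have hx₀ : (0:ℝ) < 1 + a₀ ^ 2 / β₀ := by positivity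
  -- log(1+x) ≥ log(1+x₀) + 1 − (1+x₀)/(1+x)
  have hlog : Real.log (1 + a ^ 2 / β) ≥
      Real.log (1 + a₀ ^ 2 / β₀) + 1 - (1 + a₀ ^ 2 / β₀) * (β / (β + a ^ 2)) := by
    have h1 : Real.log ((1 + a₀ ^ 2 / β₀) / (1 + a ^ 2 / β)) ≤
        (1 + a₀ ^ 2 / β₀) / (1 + a ^ 2 / β) - 1 :=
      Real.log_le_sub_one_of_pos (by positivity)
    rw [Real.log_div (ne_of_gt hx₀) (ne_of_gt hx)] at h1
    have h2 : (1 + a₀ ^ 2 / β₀) / (1 + a ^ 2 / β)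
        = (1 + a₀ ^ 2 / β₀) * (β / (β + a ^ 2)) := by
      rw [div_eq_mul_inv]
      congr 1
      rw [inv_eq_iff_eq_inv, inv_div]
      field_simp
    rw [h2] at h1
    linarith
  have hcore := sinr_core a a₀ β β₀ hA hβ hβ₀
  have hdiv : 2 * ((starRingEnd ℂ) α₀ * α).re / β₀ ≤ 2 * (a₀ * a) / β₀ := by
    exact div_le_div_of_nonneg_right (by linarith) hβ₀.le
  linarith
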